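/- An ideal of the Anderson ring R[X]_A is maximal if and only if it equals (M + XR[X])·R[X]_A for some maximal ideal M of R; moreover, the assignment M ↦ (M + XR[X])·R[X]_A is a one-to-one correspondence between the maximal ideals of R and the maximal ideals of R[X]_A. -/

import Mathlib

open Polynomial

def andersonSubmonoid (R : Type*) [CommRing R] : Submonoid (Polynomial R) where
  carrier := {f | f.coeff 0 = 1}
  one_mem' := by simp
  mul_mem' := by
    intro a b ha hb
    simp only [Set.mem_setOf_eq, Polynomial.mul_coeff_zero] at *
    rw [ha, hb, mul_one]

abbrev AndersonRing (R : Type*) [CommRing R] := Localization (andersonSubmonoid R)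

noncomputable def andersonMap (R : Type*) [CommRing R] : R →+* AndersonRing R :=
  (algebraMap (Polynomial R) (AndersonRing R)).comp Polynomial.C

section aux

variable {R : Type*} [CommRing R]

lemma comap_constantCoeff_eq (M : Ideal R) :
    Ideal.comap (Polynomial.constantCoeff : Polynomial R →+* R) M =
      Ideal.map (Polynomial.C : R →+* Polynomial R) M ⊔
        Ideal.span {(Polynomial.X : Polynomial R)} := by
  apply le_antisymm
  · intro f hf
    have h := Polynomial.X_mul_divX_add f
    have h1 : (X : Polynomial R) * f.divX ∈ Ideal.span {(Polynomial.X : Polynomial R)} :=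
      Ideal.mem_span_singleton.2 ⟨f.divX, rfl⟩
    have h2 : Polynomial.C (f.coeff 0) ∈ Ideal.map (Polynomial.C : R →+* Polynomial R) M :=
      Ideal.mem_map_of_mem _ hf
    rw [← h]
    exact Ideal.add_mem _ (Ideal.mem_sup_right h1) (Ideal.mem_sup_left h2)
  · apply sup_le
    · rw [Ideal.map_le_iff_le_comap]
      intro m hm
      simpa [Ideal.mem_comap] using hm
    · rw [Ideal.span_le]
      intro x hx
      simp only [Set.mem_singleton_iff] at hx
      subst hx
      simp [Ideal.mem_comap]

lemma disjoint_comap (M : Ideal R) (hM : M ≠ ⊤) :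
    Disjoint ((andersonSubmonoid R : Submonoid (Polynomial R)) : Set (Polynomial R))
      ((Ideal.comap (Polynomial.constantCoeff : Polynomial R →+* R) M : Ideal (Polynomial R)) :
        Set (Polynomial R)) := by
  rw [Set.disjoint_left]
  intro f hf hf'
  have h1 : f.coeff 0 = 1 := hf
  have : (1 : R) ∈ M := by
    have := Ideal.mem_comap.1 hf'
    rwa [Polynomial.constantCoeff_apply, h1] at this
  exact hM (Ideal.eq_top_of_isUnit_mem _ this isUnit_one)

lemma constantCoeff_surj : Function.Surjective (Polynomial.constantCoeff : Polynomial R →+* R) :=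
  fun r => ⟨Polynomial.C r, by simp⟩

/-- The extension of `ev0⁻¹(M)` is maximal when `M` is maximal. -/
lemma ext_isMaximal (M : Ideal R) (hM : M.IsMaximal) :
    (Ideal.map (algebraMap (Polynomial R) (AndersonRing R))
      (Ideal.comap (Polynomial.constantCoeff : Polynomial R →+* R) M)).IsMaximal := by
  set Q := Ideal.comap (Polynomial.constantCoeff : Polynomial R →+* R) M with hQ
  have hQprime : Q.IsPrime := (by haveI := hM.isPrime; exact Ideal.IsPrime.comap _)
  have hdisj := disjoint_comap M hM.ne_top
  have hEprime : (Ideal.map (algebraMap (Polynomial R) (AndersonRing R)) Q).IsPrime :=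
    IsLocalization.isPrime_of_isPrime_disjoint (andersonSubmonoid R) _ Q hQprime hdisj
  constructor
  constructor
  · exact hEprime.ne_top
  · intro J hJ
    by_contra hJtop
    -- comap J is disjoint from A
    have hJdisj : Disjoint ((andersonSubmonoid R : Submonoid (Polynomial R)) : Set (Polynomial R))
        ((Ideal.comap (algebraMap (Polynomial R) (AndersonRing R)) J : Ideal (Polynomial R)) :
          Set (Polynomial R)) := by
      rw [Set.disjoint_left]
      intro f hf hf'
      apply hJtop
      exact Ideal.eq_top_of_isUnit_mem _ (Ideal.mem_comap.1 hf')
        (IsLocalization.map_units (M := andersonSubmonoid R) (AndersonRing R) ⟨f, hf⟩)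
    -- Q ≤ comap J
    have hQle : Q ≤ Ideal.comap (algebraMap (Polynomial R) (AndersonRing R)) J :=
      le_trans Ideal.le_comap_map (Ideal.comap_mono hJ.le)
    -- map constantCoeff (comap J) is a proper ideal containing M
    set I := Ideal.map (Polynomial.constantCoeff : Polynomial R →+* R)
      (Ideal.comap (algebraMap (Polynomial R) (AndersonRing R)) J) with hI
    have hIproper : I ≠ ⊤ := by
      intro htop
      have : (1 : R) ∈ I := htop ▸ Submodule.mem_top
      obtain ⟨f, hfmem, hf1⟩ := (Ideal.mem_map_iff_of_surjective _ constantCoeff_surj).1 this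
      exact Set.disjoint_left.1 hJdisj (show f ∈ andersonSubmonoid R from hf1) hfmem
    have hMle : M ≤ I := by
      intro m hm
      have : Polynomial.C m ∈ Ideal.comap (algebraMap (Polynomial R) (AndersonRing R)) J :=
        hQle (by simpa [Q, Ideal.mem_comap] using hm)
      simpa using Ideal.mem_map_of_mem (Polynomial.constantCoeff : Polynomial R →+* R) this
    have hIM : I = M := (hM.eq_of_le hIproper hMle).symm
    have hle : Ideal.comap (algebraMap (Polynomial R) (AndersonRing R)) J ≤ Q := by
      intro f hf
      rw [hQ, Ideal.mem_comap]
      rw [← hIM]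
      exact Ideal.mem_map_of_mem _ hf
    have : J = Ideal.map (algebraMap (Polynomial R) (AndersonRing R)) Q := by
      rw [← IsLocalization.map_comap (andersonSubmonoid R) (AndersonRing R) J]
      exact le_antisymm (Ideal.map_mono hle) (Ideal.map_mono hQle)
    exact absurd this hJ.ne'

end aux

theorem anderson_maximal_ideals (R : Type*) [CommRing R] :
    (∀ m : Ideal (AndersonRing R), m.IsMaximal ↔
      ∃ M : Ideal R, M.IsMaximal ∧
        m = Ideal.map (algebraMap (Polynomial R) (AndersonRing R))
              (Ideal.map (Polynomial.C : R →+* Polynomial R) M ⊔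
                Ideal.span {(Polynomial.X : Polynomial R)})) ∧
    Set.BijOn (fun M : Ideal R =>
        Ideal.map (algebraMap (Polynomial R) (AndersonRing R))
          (Ideal.map (Polynomial.C : R →+* Polynomial R) M ⊔
            Ideal.span {(Polynomial.X : Polynomial R)}))
      {M : Ideal R | M.IsMaximal}
      {m : Ideal (AndersonRing R) | m.IsMaximal} := by
  have hmain : ∀ m : Ideal (AndersonRing R), m.IsMaximal ↔
      ∃ M : Ideal R, M.IsMaximal ∧
        m = Ideal.map (algebraMap (Polynomial R) (AndersonRing R))
              (Ideal.map (Polynomial.C : R →+* Polynomial R) M ⊔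
                Ideal.span {(Polynomial.X : Polynomial R)}) := by
    intro m
    constructor
    · intro hm
      -- m maximal: contraction P is prime disjoint from A
      set P := Ideal.comap (algebraMap (Polynomial R) (AndersonRing R)) m with hP
      have hmap : Ideal.map (algebraMap (Polynomial R) (AndersonRing R)) P = m :=
        IsLocalization.map_comap (andersonSubmonoid R) (AndersonRing R) m
      have hPdisj : ∀ f ∈ P, f.coeff 0 ≠ 1 := by
        intro f hf hf1
        exact hm.ne_top (Ideal.eq_top_of_isUnit_mem _ (Ideal.mem_comap.1 hf)
          (IsLocalization.map_units (M := andersonSubmonoid R) (AndersonRing R) ⟨f, hf1⟩))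
      -- image of P under constantCoeff is proper
      set I := Ideal.map (Polynomial.constantCoeff : Polynomial R →+* R) P with hI
      have hIproper : I ≠ ⊤ := by
        intro htop
        have : (1 : R) ∈ I := htop ▸ Submodule.mem_top
        obtain ⟨f, hfmem, hf1⟩ := (Ideal.mem_map_iff_of_surjective _ constantCoeff_surj).1 this
        exact hPdisj f hfmem hf1
      obtain ⟨M, hMmax, hIM⟩ := Ideal.exists_le_maximal I hIproper
      refine ⟨M, hMmax, ?_⟩
      rw [← comap_constantCoeff_eq]
      have hPle : P ≤ Ideal.comap (Polynomial.constantCoeff : Polynomial R →+* R) M := by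
        intro f hf
        exact Ideal.mem_comap.2 (hIM (Ideal.mem_map_of_mem _ hf))
      have hmax := ext_isMaximal M hMmax
      have hle : m ≤ Ideal.map (algebraMap (Polynomial R) (AndersonRing R))
          (Ideal.comap (Polynomial.constantCoeff : Polynomial R →+* R) M) := by
        rw [← hmap]; exact Ideal.map_mono hPle
      exact (hm.eq_of_le hmax.ne_top hle)
    · rintro ⟨M, hM, rfl⟩
      rw [← comap_constantCoeff_eq]
      exact ext_isMaximal M hM
  refine ⟨hmain, ?_, ?_, ?_⟩
  · intro M hM
    exact (hmain _).2 ⟨M, hM, rfl⟩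
  · intro M hM M' hM' heq
    simp only [Set.mem_setOf_eq] at hM hM'
    dsimp only at heq
    rw [← comap_constantCoeff_eq, ← comap_constantCoeff_eq] at heq
    have h1 := IsLocalization.comap_map_of_isPrime_disjoint (andersonSubmonoid R)
      (AndersonRing R) ((by haveI := hM.isPrime; exact Ideal.IsPrime.comap _)) (disjoint_comap M hM.ne_top)
    have h2 := IsLocalization.comap_map_of_isPrime_disjoint (andersonSubmonoid R)
      (AndersonRing R) ((by haveI := hM'.isPrime; exact Ideal.IsPrime.comap _)) (disjoint_comap M' hM'.ne_top)
    have hQ : Ideal.comap (Polynomial.constantCoeff : Polynomial R →+* R) M =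
        Ideal.comap (Polynomial.constantCoeff : Polynomial R →+* R) M' := by
      rw [← h1, ← h2, heq]
    rw [← Ideal.map_comap_of_surjective _ constantCoeff_surj M,
      ← Ideal.map_comap_of_surjective _ constantCoeff_surj M', hQ]
  · intro m hm
    simp only [Set.mem_setOf_eq] at hm
    obtain ⟨M, hM, heq⟩ := (hmain m).1 hm
    exact ⟨M, hM, heq.symm⟩
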